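/- arXiv:2505.04808 — 2 statements merged into one kernel-verified Lean document; each statement's English description precedes it below -/
import Mathlib

section
/- Let n, d be natural numbers and ε > 0 with d²ε < 1. Let λ₁ ≤ λ₂ ≤ ⋯ ≤ λₙ be real numbers in [-1,1] that are ε-dense on [-1,1], and let f : ℝ → ℝ satisfy ‖f‖∞ = 1. Then for every polynomial p ∈ 𝒫_d, the approximation error satisfies ∑_{i=1}^n |p(λᵢ) − f(λᵢ)| ≥ ‖p‖∞ (1 − d²ε) − 1. -/
open Polynomial Real Set Filter Topology

namespace MarkovAux

lemma abs_sin_nat_mul_le (m : ℕ) {θ : ℝ} (hθ : 0 ≤ Real.sin θ) :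
    |Real.sin (m * θ)| ≤ m * Real.sin θ := by
  induction m with
  | zero => simp
  | succ k ih =>
      have h1 : Real.sin ((k + 1 : ℕ) * θ)
          = Real.sin (k * θ) * Real.cos θ + Real.cos (k * θ) * Real.sin θ := by
        push_cast
        rw [add_mul, one_mul, Real.sin_add]
      rw [h1]
      have c1 : |Real.sin (k * θ) * Real.cos θ| ≤ |Real.sin (k * θ)| := by
        rw [abs_mul]
        nlinarith [Real.abs_cos_le_one θ, abs_nonneg (Real.sin (k * θ))]
      have c2 : |Real.cos (k * θ) * Real.sin θ| ≤ Real.sin θ := by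
        rw [abs_mul, abs_of_nonneg hθ]
        nlinarith [Real.abs_cos_le_one (k * θ)]
      calc |Real.sin (k * θ) * Real.cos θ + Real.cos (k * θ) * Real.sin θ|
          ≤ |Real.sin (k * θ) * Real.cos θ| + |Real.cos (k * θ) * Real.sin θ| := abs_add_le _ _
        _ ≤ (k : ℝ) * Real.sin θ + Real.sin θ := by linarith
        _ = ((k + 1 : ℕ) : ℝ) * Real.sin θ := by push_cast; ring

lemma natDegree_U_le : ∀ m : ℕ, (Polynomial.Chebyshev.U ℝ (m : ℤ)).natDegree ≤ m := by
  intro m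
  induction m using Nat.strong_induction_on with
  | _ m ih =>
    match m with
    | 0 => simp [Polynomial.Chebyshev.U_zero]
    | 1 =>
        rw [show ((1:ℕ):ℤ) = 1 by norm_num, Polynomial.Chebyshev.U_one]
        calc (2 * X : ℝ[X]).natDegree ≤ (2 : ℝ[X]).natDegree + (X : ℝ[X]).natDegree :=
              natDegree_mul_le
          _ ≤ 1 := by simp
    | (k + 2) =>
        have h2 : ((k + 2 : ℕ) : ℤ) = (k : ℤ) + 2 := by push_cast; ring
        rw [h2, Polynomial.Chebyshev.U_add_two]
        refine (natDegree_sub_le _ _).trans ?_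
        have hb : (2 * X * Polynomial.Chebyshev.U ℝ ((k:ℤ) + 1)).natDegree ≤ k + 2 := by
          refine natDegree_mul_le.trans ?_
          have h3 : ((k + 1 : ℕ) : ℤ) = (k : ℤ) + 1 := by push_cast; ring
          have := ih (k + 1) (by omega)
          rw [h3] at this
          have h4 : (2 * X : ℝ[X]).natDegree ≤ 1 :=
            natDegree_mul_le.trans (by simp)
          omega
        have hc : (Polynomial.Chebyshev.U ℝ (k : ℤ)).natDegree ≤ k := ih k (by omega)
        simp only [max_le_iff]
        exact ⟨hb, hc.trans (by omega)⟩

lemma zero_count (nn : ℕ) (Q : Polynomial ℂ) (hdeg : Q.natDegree ≤ 2 * nn)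
    (g : ℝ → ℝ)
    (hrel : ∀ θ : ℝ, Q.eval (Complex.exp (θ * Complex.I))
      = Complex.exp ((nn : ℂ) * (θ * Complex.I)) * ((g θ : ℝ) : ℂ))
    (a : ℝ) (ζ : Fin (2 * nn + 2) → ℝ) (hmem : ∀ k, ζ k ∈ Set.Ioo a (a + 2 * π))
    (hinj : Function.Injective ζ) (hzero : ∀ k, g (ζ k) = 0) :
    ∀ θ : ℝ, g θ = 0 := by
  have hπ := Real.pi_pos
  have hQ : Q = 0 := by
    apply Polynomial.eq_zero_of_natDegree_lt_card_of_eval_eq_zero Q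
      (f := fun k => Complex.exp ((ζ k : ℂ) * Complex.I))
    · intro i j hij
      rw [Complex.exp_eq_exp_iff_exists_int] at hij
      obtain ⟨m, hm⟩ := hij
      have him : ζ i = ζ j + (m : ℝ) * (2 * π) := by
        have h := congrArg Complex.im hm
        simpa using h
      have h1 := (hmem i).1; have h2 := (hmem i).2
      have h3 := (hmem j).1; have h4 := (hmem j).2
      have hm0 : m = 0 := by
        have hlt : ((m : ℝ)) * (2 * π) < 2 * π := by linarith
        have hgt : (-(2 * π) : ℝ) < (m : ℝ) * (2 * π) := by linarith
        have hm1 : (m : ℝ) < 1 := by nlinarith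
        have hm2 : (-1 : ℝ) < (m : ℝ) := by nlinarith
        have ha : (-1 : ℤ) < m := by exact_mod_cast hm2
        have hb : m < (1 : ℤ) := by exact_mod_cast hm1
        omega
      apply hinj
      rw [him, hm0]
      simp
    · intro k
      rw [hrel]
      rw [hzero k]
      simp
    · simpa using by omega
  intro θ
  have h := hrel θ
  rw [hQ] at h
  simp only [Polynomial.eval_zero] at h
  have := (Complex.exp_ne_zero ((nn : ℂ) * (θ * Complex.I)))
  field_simp at h
  exact_mod_cast (mul_eq_zero.1 h.symm).resolve_left (Complex.exp_ne_zero _)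


lemma exists_Q (n : ℕ) (p : ℝ[X]) (hdeg : p.natDegree ≤ n) (lam M β : ℝ) :
    ∃ Q : Polynomial ℂ, Q.natDegree ≤ 2 * n ∧
      ∀ θ : ℝ, Q.eval (Complex.exp (θ * Complex.I))
        = Complex.exp ((n : ℂ) * (θ * Complex.I)) *
          ((lam * p.eval (Real.cos θ) - M * Real.sin ((n : ℝ) * θ + β) : ℝ) : ℂ) := by
  classical
  set P : Polynomial ℂ := ∑ k ∈ Finset.range (n + 1),
      Polynomial.C ((p.coeff k : ℂ) / 2 ^ k) * (X ^ (n - k) * (X ^ 2 + 1) ^ k) with hPdef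
  have hPdeg : P.natDegree ≤ 2 * n := by
    rw [hPdef]
    apply Polynomial.natDegree_sum_le_of_forall_le
    intro k hk
    have hk' : k ≤ n := Nat.lt_succ_iff.1 (Finset.mem_range.1 hk)
    have h2 : ((X : Polynomial ℂ) ^ (n - k)).natDegree = n - k := natDegree_X_pow _
    have h3 : ((X : Polynomial ℂ) ^ 2 + 1).natDegree ≤ 2 := by
      refine (natDegree_add_le _ _).trans ?_
      simp [natDegree_X_pow]
    have h4 : (((X : Polynomial ℂ) ^ 2 + 1) ^ k).natDegree ≤ k * 2 :=
      natDegree_pow_le.trans (by nlinarith)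
    have h5 : ((X ^ (n - k) * (X ^ 2 + 1) ^ k : Polynomial ℂ)).natDegree ≤ (n - k) + k * 2 :=
      natDegree_mul_le.trans (by omega)
    refine natDegree_mul_le.trans ?_
    rw [natDegree_C]
    omega
  have hPeval : ∀ θ : ℝ, P.eval (Complex.exp (θ * Complex.I))
      = Complex.exp ((n : ℂ) * (θ * Complex.I)) * ((p.eval (Real.cos θ) : ℝ) : ℂ) := by
    intro θ
    rw [hPdef, Polynomial.eval_finset_sum]
    have hcosid : (Complex.exp (θ * Complex.I)) ^ 2 + 1
        = Complex.exp (θ * Complex.I) * (2 * ((Real.cos θ : ℝ) : ℂ)) := by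
      rw [Complex.ofReal_cos, Complex.cos]
      have hinv : Complex.exp (θ * Complex.I) * Complex.exp (-(θ * Complex.I)) = 1 := by
        rw [← Complex.exp_add]; simp
      have : (-(θ : ℂ)) * Complex.I = -((θ : ℂ) * Complex.I) := by ring
      rw [this, ← hinv]
      ring
    have hterm : ∀ k ∈ Finset.range (n + 1),
        Polynomial.eval (Complex.exp (θ * Complex.I))
          (Polynomial.C ((p.coeff k : ℂ) / 2 ^ k) * (X ^ (n - k) * (X ^ 2 + 1) ^ k))
        = Complex.exp ((n : ℂ) * (θ * Complex.I)) * ((p.coeff k : ℂ) * ((Real.cos θ : ℂ)) ^ k) := by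
      intro k hk
      have hk' : k ≤ n := Nat.lt_succ_iff.1 (Finset.mem_range.1 hk)
      simp only [Polynomial.eval_mul, Polynomial.eval_C, Polynomial.eval_pow, Polynomial.eval_X,
        Polynomial.eval_add, Polynomial.eval_one]
      rw [hcosid]
      have hE : (Complex.exp (θ * Complex.I)) ^ (n - k) * (Complex.exp (θ * Complex.I)) ^ k
          = Complex.exp ((n : ℂ) * (θ * Complex.I)) := by
        rw [← pow_add, ← Complex.exp_nat_mul]
        congr 1
        rw [Nat.sub_add_cancel hk']
      rw [mul_pow, ← hE]
      have h2 : ((2 : ℂ)) ^ k ≠ 0 := pow_ne_zero _ two_ne_zero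
      field_simp
      ring
    rw [Finset.sum_congr rfl hterm, ← Finset.mul_sum]
    congr 1
    rw [Polynomial.eval_eq_sum_range' (Nat.lt_succ_of_le hdeg) (Real.cos θ)]
    push_cast
    ring
  refine ⟨Polynomial.C (lam : ℂ) * P - Polynomial.C ((M : ℂ) / (2 * Complex.I)) *
      (Polynomial.C (Complex.exp ((β : ℂ) * Complex.I)) * X ^ (2 * n)
        - Polynomial.C (Complex.exp (-(β : ℂ) * Complex.I))), ?_, ?_⟩
  · refine (natDegree_sub_le _ _).trans ?_
    have hq1 : (Polynomial.C (lam : ℂ) * P).natDegree ≤ 2 * n :=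
      natDegree_mul_le.trans (by rw [natDegree_C]; omega)
    have hq2 : (Polynomial.C ((M : ℂ) / (2 * Complex.I)) *
        (Polynomial.C (Complex.exp ((β : ℂ) * Complex.I)) * X ^ (2 * n)
          - Polynomial.C (Complex.exp (-(β : ℂ) * Complex.I)))).natDegree ≤ 2 * n := by
      refine natDegree_mul_le.trans ?_
      rw [natDegree_C]
      have : (Polynomial.C (Complex.exp ((β : ℂ) * Complex.I)) * X ^ (2 * n)
          - Polynomial.C (Complex.exp (-(β : ℂ) * Complex.I))).natDegree ≤ 2 * n := by
        refine (natDegree_sub_le _ _).trans ?_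
        have ha : (Polynomial.C (Complex.exp ((β : ℂ) * Complex.I)) * X ^ (2*n)).natDegree ≤ 2*n :=
          natDegree_mul_le.trans (by rw [natDegree_C, natDegree_X_pow]; omega)
        have hb : (Polynomial.C (Complex.exp (-(β : ℂ) * Complex.I))).natDegree = 0 :=
          natDegree_C _
        omega
      omega
    omega
  · intro θ
    simp only [Polynomial.eval_sub, Polynomial.eval_mul, Polynomial.eval_C, Polynomial.eval_pow,
      Polynomial.eval_X]
    rw [hPeval θ]
    set w : ℂ := (n : ℂ) * (θ : ℂ) + (β : ℂ) with hwdef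
    have hA1 : Complex.exp ((β : ℂ) * Complex.I) * (Complex.exp (θ * Complex.I)) ^ (2 * n)
        = Complex.exp ((n : ℂ) * (θ * Complex.I)) * Complex.exp (w * Complex.I) := by
      rw [← Complex.exp_nat_mul, ← Complex.exp_add, ← Complex.exp_add]
      congr 1
      rw [hwdef]
      push_cast
      ring
    have hA2 : Complex.exp (-(β : ℂ) * Complex.I)
        = Complex.exp ((n : ℂ) * (θ * Complex.I)) * Complex.exp (-w * Complex.I) := by
      rw [← Complex.exp_add]
      congr 1
      rw [hwdef]
      push_cast
      ring
    push_cast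
    rw [← hwdef, Complex.sin, hA1, hA2]
    have hI : Complex.I ≠ 0 := Complex.I_ne_zero
    field_simp [Complex.I_sq]
    ring_nf
    simp only [Complex.I_sq]
    ring


lemma glue_mono {z0 z1 z2 : ℝ} {zs : ℕ → ℝ} (h0 : z0 < z1) (h1 : z1 < z2) (h2 : z2 < zs 0)
    (h3 : ∀ j, zs j < zs (j + 1)) :
    StrictMono (fun j : ℕ => match j with | 0 => z0 | 1 => z1 | 2 => z2 | (j + 3) => zs j) := by
  apply strictMono_nat_of_lt_succ
  intro j
  match j with
  | 0 => exact h0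
  | 1 => exact h1
  | 2 => exact h2
  | (j + 3) => exact h3 j

lemma glue_prop {P : ℝ → Prop} {z0 z1 z2 : ℝ} {zs : ℕ → ℝ} (h0 : P z0) (h1 : P z1) (h2 : P z2)
    (h3 : ∀ j, P (zs j)) :
    ∀ j : ℕ, P ((fun j : ℕ => match j with | 0 => z0 | 1 => z1 | 2 => z2 | (j + 3) => zs j) j) := by
  intro j
  match j with
  | 0 => exact h0
  | 1 => exact h1
  | 2 => exact h2
  | (j + 3) => exact h3 j

set_option maxHeartbeats 2000000 in
lemma bernstein_aux (n : ℕ) (hn : 1 ≤ n) (p : ℝ[X]) (hdeg : p.natDegree ≤ n)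
    (M : ℝ) (hM : ∀ x ∈ Set.Icc (-1 : ℝ) 1, |p.eval x| ≤ M)
    (θ₀ : ℝ) (hθ₀ : θ₀ ∈ Set.Ioo 0 π)
    (hbig : (n : ℝ) * M < -((Polynomial.derivative p).eval (Real.cos θ₀)) * Real.sin θ₀) :
    False := by
  have hπ := Real.pi_pos
  have hn0 : (0 : ℝ) < n := by exact_mod_cast hn
  have hM0 : 0 ≤ M := le_trans (abs_nonneg _) (hM 0 (by norm_num))
  -- M > 0
  rcases eq_or_lt_of_le hM0 with hMeq | hMpos
  · -- M = 0 : p vanishes on [-1,1], so p = 0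
    have hp0 : p = 0 := by
      apply Polynomial.eq_zero_of_infinite_isRoot
      have hsub : Set.Icc (-1 : ℝ) 1 ⊆ {x | p.IsRoot x} := by
        intro x hx
        have h := hM x hx
        rw [← hMeq] at h
        have h2 : p.eval x = 0 := abs_nonpos_iff.mp h
        simpa [Polynomial.IsRoot] using h2
      exact Set.Infinite.mono hsub (Set.Icc_infinite (by norm_num : (-1 : ℝ) < 1))
    rw [hp0] at hbig
    simp only [derivative_zero, Polynomial.eval_zero, neg_zero, zero_mul] at hbig
    rw [← hMeq, mul_zero] at hbig
    exact lt_irrefl 0 hbig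
  set T' : ℝ := -((Polynomial.derivative p).eval (Real.cos θ₀)) * Real.sin θ₀ with hT'def
  have hT'pos : 0 < T' := lt_of_le_of_lt (by positivity) hbig
  clear_value T'
  obtain ⟨lam, hlam_pos, hlam_lt, hlamT⟩ :
      ∃ lam : ℝ, 0 < lam ∧ lam < 1 ∧ (n : ℝ) * M < lam * T' := by
    refine ⟨((n : ℝ) * M + T') / (2 * T'), div_pos (by positivity) (by linarith),
      (div_lt_one (by linarith)).2 (by nlinarith), ?_⟩
    have hkey : ((n : ℝ) * M + T') / (2 * T') * T' = ((n : ℝ) * M + T') / 2 := by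
      field_simp
    rw [hkey]
    nlinarith
  set t : ℝ → ℝ := fun θ => p.eval (Real.cos θ) with htdef
  have hmemt : ∀ θ, |t θ| ≤ M := fun θ =>
    hM _ ⟨Real.neg_one_le_cos θ, Real.cos_le_one θ⟩
  have ht : ∀ θ, HasDerivAt t (-((Polynomial.derivative p).eval (Real.cos θ)) * Real.sin θ) θ := by
    intro θ
    have h1 := (Polynomial.hasDerivAt p (Real.cos θ)).comp θ (Real.hasDerivAt_cos θ)
    exact h1.congr_deriv (by ring)
  have htcont : Continuous t := (Polynomial.continuous p).comp Real.continuous_cos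
  have hs_abs : |lam * t θ₀ / M| < 1 := by
    rw [abs_div, abs_of_pos hMpos, div_lt_one hMpos, abs_mul, abs_of_pos hlam_pos]
    calc lam * |t θ₀| ≤ lam * M := by
          exact mul_le_mul_of_nonneg_left (hmemt θ₀) hlam_pos.le
      _ < M := by nlinarith
  have hs1 : -1 < lam * t θ₀ / M := (abs_lt.1 hs_abs).1
  have hs2 : lam * t θ₀ / M < 1 := (abs_lt.1 hs_abs).2
  set α : ℝ := Real.arcsin (lam * t θ₀ / M) with hαdef
  have hsinα : Real.sin α = lam * t θ₀ / M := Real.sin_arcsin (by linarith) (by linarith)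
  have hα1 : -(π / 2) < α := Real.neg_pi_div_two_lt_arcsin.2 hs1
  have hα2 : α < π / 2 := Real.arcsin_lt_pi_div_two.2 hs2
  have hcosα0 : 0 ≤ Real.cos α := Real.cos_nonneg_of_mem_Icc ⟨hα1.le, hα2.le⟩
  have hcosα1 : Real.cos α ≤ 1 := Real.cos_le_one α
  set g : ℝ → ℝ := fun θ => lam * t θ - M * Real.sin ((n : ℝ) * (θ - θ₀) + α) with hgdef
  have hMne : M ≠ 0 := ne_of_gt hMpos
  have hgθ₀ : g θ₀ = 0 := by
    rw [hgdef]
    simp only [sub_self, mul_zero, zero_add, hsinα]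
    field_simp
    ring
  have hgc : Continuous g := by
    apply Continuous.sub
    · exact continuous_const.mul htcont
    · exact continuous_const.mul (Real.continuous_sin.comp (by continuity))
  -- derivative of g at θ₀
  set G : ℝ := lam * T' - M * (Real.cos α * n) with hGdef
  have hg' : HasDerivAt g G θ₀ := by
    have hinner : HasDerivAt (fun θ : ℝ => (n : ℝ) * (θ - θ₀) + α) ((n : ℝ) * 1) θ₀ := by
      exact (((hasDerivAt_id θ₀).sub_const θ₀).const_mul (n : ℝ)).add_const α
    have hsin := (Real.hasDerivAt_sin ((n : ℝ) * (θ₀ - θ₀) + α)).comp θ₀ hinner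
    have hfirst := (ht θ₀).const_mul lam
    have := hfirst.sub (hsin.const_mul M)
    simp only [sub_self, mul_zero, zero_add, mul_one] at this
    exact this.congr_deriv (by rw [hGdef, hT'def])
  have hGpos : 0 < G := by
    rw [hGdef]
    nlinarith [mul_le_mul_of_nonneg_left hcosα1 (by positivity : (0:ℝ) ≤ M * n)]
  -- alternation points
  set θk : ℕ → ℝ := fun k => θ₀ + (π / 2 - α + k * π) / n with hθkdef
  set θm : ℝ := θ₀ - (π / 2 + α) / n with hθmdef
  have hθkval : ∀ k : ℕ, (n : ℝ) * (θk k - θ₀) + α = π / 2 + k * π := by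
    intro k
    rw [hθkdef]
    field_simp
    ring
  have hθk_mono : StrictMono θk := by
    intro i j hij
    rw [hθkdef]
    simp only
    have h0 : (i : ℝ) < j := by exact_mod_cast hij
    have h1 : (i : ℝ) * π < j * π := by nlinarith
    gcongr

  have hθmval : (n : ℝ) * (θm - θ₀) + α = -(π / 2) := by
    rw [hθmdef]
    field_simp
    ring
  have hsmall : ∀ θ, |lam * t θ| < M := by
    intro θ
    rw [abs_mul, abs_of_pos hlam_pos]
    calc lam * |t θ| ≤ lam * M := mul_le_mul_of_nonneg_left (hmemt θ) hlam_pos.le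
      _ < M := by nlinarith
  have hgθk : ∀ k : ℕ, g (θk k) = lam * t (θk k) - M * (-1 : ℝ) ^ k := by
    intro k
    rw [hgdef]
    simp only
    rw [hθkval k, Real.sin_add_nat_mul_pi, Real.sin_pi_div_two, mul_one]
  have heven : ∀ k : ℕ, Even k → g (θk k) < 0 := by
    intro k hk
    rw [hgθk k, hk.neg_one_pow]
    have h := abs_lt.1 (hsmall (θk k))
    linarith [h.2]
  have hodd : ∀ k : ℕ, Odd k → 0 < g (θk k) := by
    intro k hk
    rw [hgθk k, hk.neg_one_pow]
    have h := abs_lt.1 (hsmall (θk k))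
    linarith [h.1]
  have hgθm : 0 < g θm := by
    rw [hgdef]
    simp only
    rw [hθmval, Real.sin_neg, Real.sin_pi_div_two]
    have h := abs_lt.1 (hsmall θm)
    linarith [h.1]
  have hθm_lt : θm < θ₀ := by
    rw [hθmdef]
    have h1 : 0 < (π / 2 + α) / n := div_pos (by linarith) hn0
    linarith
  have hθ0_lt : θ₀ < θk 0 := by
    rw [hθkdef]
    simp only [Nat.cast_zero, zero_mul, add_zero]
    have h1 : 0 < (π / 2 - α) / n := div_pos (by linarith) hn0
    linarith
  have hslope := hasDerivAt_iff_tendsto_slope.1 hg'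
  have hev : ∀ᶠ x in 𝓝[≠] θ₀, 0 < slope g θ₀ x :=
    hslope.eventually (eventually_gt_nhds hGpos)
  obtain ⟨u, huIoo, huslope⟩ : ∃ u, u ∈ Set.Ioo θm θ₀ ∧ 0 < slope g θ₀ u := by
    have h1 : ∀ᶠ x in 𝓝[<] θ₀, 0 < slope g θ₀ x :=
      hev.filter_mono (nhdsWithin_mono θ₀ (fun x hx => ne_of_lt hx))
    have h2 : Set.Ioo θm θ₀ ∈ 𝓝[<] θ₀ := Ioo_mem_nhdsLT_of_mem ⟨hθm_lt, le_refl θ₀⟩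
    obtain ⟨u, hu1, hu2⟩ := (h1.and (eventually_of_mem h2 (fun x hx => hx))).exists
    exact ⟨u, hu2, hu1⟩
  obtain ⟨v, hvIoo, hvslope⟩ : ∃ v, v ∈ Set.Ioo θ₀ (θk 0) ∧ 0 < slope g θ₀ v := by
    have h1 : ∀ᶠ x in 𝓝[>] θ₀, 0 < slope g θ₀ x :=
      hev.filter_mono (nhdsWithin_mono θ₀ (fun x hx => ne_of_gt hx))
    have h2 : Set.Ioo θ₀ (θk 0) ∈ 𝓝[>] θ₀ := Ioo_mem_nhdsGT_of_mem ⟨le_refl θ₀, hθ0_lt⟩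
    obtain ⟨v, hv1, hv2⟩ := (h1.and (eventually_of_mem h2 (fun x hx => hx))).exists
    exact ⟨v, hv2, hv1⟩
  have hgu : g u < 0 := by
    have h := huslope
    rw [slope_def_field, hgθ₀, sub_zero] at h
    rcases div_pos_iff.1 h with ⟨_, hb⟩ | ⟨ha, _⟩
    · linarith [huIoo.2]
    · exact ha
  have hgv : 0 < g v := by
    have h := hvslope
    rw [slope_def_field, hgθ₀, sub_zero] at h
    rcases div_pos_iff.1 h with ⟨ha, _⟩ | ⟨_, hb⟩
    · exact ha
    · linarith [hvIoo.1]
  have hIVT : ∀ k : ℕ, ∃ z, z ∈ Set.Ioo (θk k) (θk (k + 1)) ∧ g z = 0 := by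
    intro k
    have hle : θk k ≤ θk (k + 1) := (hθk_mono (Nat.lt_succ_self k)).le
    rcases Nat.even_or_odd k with he | ho
    · have h0 : (0 : ℝ) ∈ Set.Ioo (g (θk k)) (g (θk (k + 1))) :=
        ⟨heven k he, hodd (k + 1) (Even.add_one he)⟩
      obtain ⟨z, hz, hz0⟩ := intermediate_value_Ioo hle hgc.continuousOn h0
      exact ⟨z, hz, hz0⟩
    · have h0 : (0 : ℝ) ∈ Set.Ioo (g (θk (k + 1))) (g (θk k)) :=
        ⟨heven (k + 1) (Odd.add_one ho), hodd k ho⟩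
      obtain ⟨z, hz, hz0⟩ := intermediate_value_Ioo' hle hgc.continuousOn h0
      exact ⟨z, hz, hz0⟩
  choose zs hzs hzs0 using hIVT
  obtain ⟨zm, hzm, hzm0⟩ : ∃ z, z ∈ Set.Ioo θm u ∧ g z = 0 := by
    have h0 : (0 : ℝ) ∈ Set.Ioo (g u) (g θm) := ⟨hgu, hgθm⟩
    obtain ⟨z, hz, hz0⟩ := intermediate_value_Ioo' huIoo.1.le hgc.continuousOn h0
    exact ⟨z, hz, hz0⟩
  obtain ⟨zp, hzp, hzp0⟩ : ∃ z, z ∈ Set.Ioo v (θk 0) ∧ g z = 0 := by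
    have h0 : (0 : ℝ) ∈ Set.Ioo (g (θk 0)) (g v) := ⟨heven 0 Even.zero, hgv⟩
    obtain ⟨z, hz, hz0⟩ := intermediate_value_Ioo' hvIoo.2.le hgc.continuousOn h0
    exact ⟨z, hz, hz0⟩
  -- the comparison polynomial
  obtain ⟨Q, hQdeg, hQrel⟩ := exists_Q n p hdeg lam M (α - (n : ℝ) * θ₀)
  have hrel : ∀ θ : ℝ, Q.eval (Complex.exp (θ * Complex.I))
      = Complex.exp ((n : ℂ) * (θ * Complex.I)) * ((g θ : ℝ) : ℂ) := by
    intro θ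
    have harg : (n : ℝ) * θ + (α - (n : ℝ) * θ₀) = (n : ℝ) * (θ - θ₀) + α := by ring
    have hgθ : g θ = lam * p.eval (Real.cos θ) - M * Real.sin ((n : ℝ) * θ + (α - (n : ℝ) * θ₀)) := by
      rw [hgdef]
      simp only [htdef]
      rw [harg]
    rw [hQrel θ, hgθ]
  set F : ℕ → ℝ := fun j => match j with | 0 => zm | 1 => θ₀ | 2 => zp | (j + 3) => zs j with hFdef
  have hFmono : StrictMono F := glue_mono (lt_trans hzm.2 huIoo.2) (lt_trans hvIoo.1 hzp.1)
    (lt_trans hzp.2 (hzs 0).1) (fun j => lt_trans (hzs j).2 (hzs (j + 1)).1)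
  have hFzero : ∀ j : ℕ, g (F j) = 0 :=
    glue_prop (P := fun x => g x = 0) hzm0 hgθ₀ hzp0 (fun j => hzs0 j)
  have hFlow : ∀ j : ℕ, θm < F j := by
    intro j
    exact lt_of_lt_of_le hzm.1 (hFmono.monotone (Nat.zero_le j))
  have hlastval : F (2 * n + 1) = zs (2 * n - 2) := by
    have h1 : 2 * n + 1 = (2 * n - 2) + 3 := by omega
    rw [h1]
  have hθklast : θk (2 * n - 1) = θm + 2 * π := by
    rw [hθkdef, hθmdef]
    simp only
    rw [Nat.cast_sub (by omega : 1 ≤ 2 * n)]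
    push_cast
    field_simp
    ring
  have hFhigh : ∀ j : ℕ, j ≤ 2 * n + 1 → F j < θm + 2 * π := by
    intro j hj
    have h1 : F j ≤ F (2 * n + 1) := hFmono.monotone hj
    have h2 : F (2 * n + 1) < θk (2 * n - 1) := by
      rw [hlastval]
      have h3 := (hzs (2 * n - 2)).2
      have he : 2 * n - 2 + 1 = 2 * n - 1 := by omega
      rw [he] at h3
      exact h3
    rw [hθklast] at h2
    linarith
  have hall : ∀ θ : ℝ, g θ = 0 := by
    apply zero_count n Q hQdeg g hrel θm (fun k : Fin (2 * n + 2) => F k.val)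
    · intro k
      have hk := k.isLt
      exact ⟨hFlow k.val, hFhigh k.val (by omega)⟩
    · intro i j hij
      exact Fin.ext (hFmono.injective hij)
    · intro k
      exact hFzero k.val
  have hfin := hall v
  linarith

lemma prod_parity {s : Finset ℕ} {f : ℕ → ℝ} (h : ∀ j ∈ s, f j ≤ 0) :
    0 ≤ (-1 : ℝ) ^ s.card * ∏ j ∈ s, f j := by
  have h1 : ∏ j ∈ s, (-(f j)) = (-1 : ℝ) ^ s.card * ∏ j ∈ s, f j := by
    rw [← Finset.prod_const (-1 : ℝ), ← Finset.prod_mul_distrib]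
    apply Finset.prod_congr rfl
    intro j hj
    ring
  have h2 : 0 ≤ ∏ j ∈ s, (-(f j)) := Finset.prod_nonneg fun j hj => neg_nonneg.2 (h j hj)
  linarith [h1 ▸ h2]

lemma arccos_lt_pi' {x : ℝ} (hx : -1 < x) : Real.arccos x < π := by
  refine lt_of_le_of_ne (Real.arccos_le_pi x) ?_
  intro h
  rw [Real.arccos_eq_pi] at h
  linarith

lemma bernsteinPt (n : ℕ) (hn : 1 ≤ n) (p : ℝ[X]) (hdeg : p.natDegree ≤ n)
    (M : ℝ) (hM : ∀ x ∈ Set.Icc (-1 : ℝ) 1, |p.eval x| ≤ M)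
    (θ : ℝ) (hθ : θ ∈ Set.Ioo 0 π) :
    |(Polynomial.derivative p).eval (Real.cos θ)| * Real.sin θ ≤ (n : ℝ) * M := by
  by_contra hcon
  push_neg at hcon
  rcases le_or_gt ((Polynomial.derivative p).eval (Real.cos θ)) 0 with hDle | hDpos
  · refine bernstein_aux n hn p hdeg M hM θ hθ ?_
    rw [abs_of_nonpos hDle] at hcon
    exact hcon
  · refine bernstein_aux n hn (-p) ?_ M ?_ θ hθ ?_
    · rw [Polynomial.natDegree_neg]
      exact hdeg
    · intro x hx
      rw [Polynomial.eval_neg, abs_neg]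
      exact hM x hx
    · rw [Polynomial.derivative_neg, Polynomial.eval_neg, neg_neg]
      rw [abs_of_pos hDpos] at hcon
      exact hcon

lemma endzone (n : ℕ) (hn : 1 ≤ n) (p : ℝ[X]) (hdeg : p.natDegree ≤ n)
    (M : ℝ) (hM : ∀ x ∈ Set.Icc (-1 : ℝ) 1, |p.eval x| ≤ M) :
    ∀ x ∈ Set.Icc (Real.cos (π / (2 * n))) 1,
      |(Polynomial.derivative p).eval x| ≤ (n : ℝ) ^ 2 * M := by
  classical
  have hπ := Real.pi_pos
  have hn0 : (0 : ℝ) < n := by exact_mod_cast hn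
  have hM0 : 0 ≤ M := le_trans (abs_nonneg _) (hM 0 (by norm_num))
  set ang : ℕ → ℝ := fun k => (2 * k + 1) * π / (2 * n) with hangdef
  set v : ℕ → ℝ := fun k => Real.cos (ang k) with hvdef
  have hang_pos : ∀ k : ℕ, 0 < ang k := by
    intro k
    rw [hangdef]
    positivity
  have hang_lt : ∀ k < n, ang k < π := by
    intro k hk
    rw [hangdef, div_lt_iff₀ (by positivity)]
    have h1 : (k : ℝ) + 1 ≤ n := by exact_mod_cast hk
    nlinarith
  have hang_mono : ∀ {j k : ℕ}, j < k → ang j < ang k := by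
    intro j k hjk
    rw [hangdef]
    simp only
    have h1 : (j : ℝ) < k := by exact_mod_cast hjk
    gcongr
  have hsin_pos : ∀ k < n, 0 < Real.sin (ang k) :=
    fun k hk => Real.sin_pos_of_pos_of_lt_pi (hang_pos k) (hang_lt k hk)
  have hv_lt : ∀ {j k : ℕ}, j < k → k < n → v k < v j := by
    intro j k hjk hk
    rw [hvdef]
    apply Real.strictAntiOn_cos
    · exact ⟨(hang_pos j).le, (hang_lt j (lt_trans hjk hk)).le.trans (le_refl π)⟩
    · exact ⟨(hang_pos k).le, (hang_lt k hk).le⟩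
    · exact hang_mono hjk
  have hvs : Set.InjOn v ↑(Finset.range n) := by
    intro a ha b hb hab
    simp only [Finset.coe_range, Set.mem_Iio] at ha hb
    by_contra hne
    rcases lt_or_gt_of_ne hne with h | h
    · exact absurd hab (ne_of_gt (hv_lt h hb))
    · exact absurd hab (ne_of_lt (hv_lt h ha))
  set q : ℝ[X] := Polynomial.derivative p with hqdef
  have hq_deg : q.degree < ((Finset.range n).card : ℕ) := by
    rw [Finset.card_range]
    refine lt_of_le_of_lt (Polynomial.degree_le_natDegree) ?_
    have h1 : q.natDegree ≤ n - 1 := le_trans (Polynomial.natDegree_derivative_le p) (by omega)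
    exact_mod_cast lt_of_le_of_lt (Nat.cast_le.2 h1) (by exact_mod_cast (by omega : n - 1 < n))
  set D : ℝ[X] := Polynomial.derivative (Polynomial.Chebyshev.T ℝ (n : ℤ)) with hDdef
  have hDU : D = ((n : ℤ) : ℝ[X]) * Polynomial.Chebyshev.U ℝ ((n : ℤ) - 1) :=
    Polynomial.Chebyshev.T_derivative_eq_U (R := ℝ) (n : ℤ)
  have hD_deg : D.degree < ((Finset.range n).card : ℕ) := by
    rw [Finset.card_range]
    refine lt_of_le_of_lt (Polynomial.degree_le_natDegree) ?_
    have h0 : ((n : ℤ) - 1) = ((n - 1 : ℕ) : ℤ) := by omega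
    have h1 : D.natDegree ≤ n - 1 := by
      rw [hDU, h0]
      refine Polynomial.natDegree_mul_le.trans ?_
      have h2 := natDegree_U_le (n - 1)
      simp only [Polynomial.natDegree_intCast]
      omega
    exact_mod_cast lt_of_le_of_lt (Nat.cast_le.2 h1) (by exact_mod_cast (by omega : n - 1 < n))
  -- evaluation of D on nodes and on [-1,1]
  have hDsin : ∀ θ : ℝ, D.eval (Real.cos θ) * Real.sin θ = (n : ℝ) * Real.sin ((n : ℝ) * θ) := by
    intro θ
    rw [hDU]
    have hU := Polynomial.Chebyshev.U_real_cos θ ((n : ℤ) - 1)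
    push_cast at hU
    rw [show ((n : ℝ) - 1 + 1) = (n : ℝ) by ring] at hU
    simp only [Polynomial.eval_mul, Polynomial.eval_intCast]
    push_cast
    rw [mul_assoc, hU]
  have hnang : ∀ k : ℕ, (n : ℝ) * ang k = π / 2 + k * π := by
    intro k
    rw [hangdef]
    field_simp
    ring
  have hDval : ∀ k : ℕ, k < n → D.eval (v k) = (n : ℝ) * ((-1 : ℝ) ^ k / Real.sin (ang k)) := by
    intro k hk
    have h1 := hDsin (ang k)
    rw [hnang k, Real.sin_add_nat_mul_pi, Real.sin_pi_div_two, mul_one] at h1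
    have h2 := hsin_pos k hk
    field_simp at h1 ⊢
    linarith [h1]
  have hDbound : ∀ x ∈ Set.Icc (-1 : ℝ) 1, |D.eval x| ≤ (n : ℝ) ^ 2 := by
    have hclosed : IsClosed {x : ℝ | |D.eval x| ≤ (n : ℝ) ^ 2} :=
      isClosed_le ((Polynomial.continuous D).abs) continuous_const
    have hIoo : Set.Ioo (-1 : ℝ) 1 ⊆ {x | |D.eval x| ≤ (n : ℝ) ^ 2} := by
      intro x hx
      have hθ1 : 0 < Real.arccos x := Real.arccos_pos.2 hx.2
      have hθ2 : Real.arccos x < π := arccos_lt_pi' hx.1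
      have hcx : Real.cos (Real.arccos x) = x := Real.cos_arccos hx.1.le hx.2.le
      have hs := Real.sin_pos_of_pos_of_lt_pi hθ1 hθ2
      have h1 := hDsin (Real.arccos x)
      rw [hcx] at h1
      have h2 : |Real.sin ((n : ℝ) * Real.arccos x)| ≤ (n : ℝ) * Real.sin (Real.arccos x) :=
        abs_sin_nat_mul_le n hs.le
      have h3 : |D.eval x| * Real.sin (Real.arccos x) ≤ (n : ℝ) ^ 2 * Real.sin (Real.arccos x) := by
        calc |D.eval x| * Real.sin (Real.arccos x)
            = |D.eval x * Real.sin (Real.arccos x)| := by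
              rw [abs_mul, abs_of_pos hs]
          _ = (n : ℝ) * |Real.sin ((n : ℝ) * Real.arccos x)| := by
              rw [h1, abs_mul, abs_of_nonneg (by positivity : (0:ℝ) ≤ (n:ℝ))]
          _ ≤ (n : ℝ) * ((n : ℝ) * Real.sin (Real.arccos x)) := by
              apply mul_le_mul_of_nonneg_left h2 (by positivity)
          _ = (n : ℝ) ^ 2 * Real.sin (Real.arccos x) := by ring
      exact le_of_mul_le_mul_right h3 hs
    intro x hx
    have hxcl : x ∈ closure (Set.Ioo (-1 : ℝ) 1) := by
      rw [closure_Ioo (by norm_num : (-1 : ℝ) ≠ 1)]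
      exact hx
    exact closure_minimal hIoo hclosed hxcl
  -- node values of q
  have hval : ∀ k : ℕ, k < n → |q.eval (v k)| ≤ (n : ℝ) * M / Real.sin (ang k) := by
    intro k hk
    have hb := bernsteinPt n hn p hdeg M hM (ang k) ⟨hang_pos k, hang_lt k hk⟩
    rw [le_div_iff₀ (hsin_pos k hk)]
    exact hb
  -- interpolation identities
  have key1 : q = Lagrange.interpolate (Finset.range n) v fun k => q.eval (v k) :=
    Lagrange.eq_interpolate hvs hq_deg
  have key2 : D = Lagrange.interpolate (Finset.range n) v fun k => D.eval (v k) :=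
    Lagrange.eq_interpolate hvs hD_deg
  intro x hx
  have hv0 : v 0 = Real.cos (π / (2 * n)) := by
    rw [hvdef, hangdef]
    norm_num
  have hxv : ∀ k < n, v k ≤ x := by
    intro k hk
    rcases Nat.eq_zero_or_pos k with rfl | hkpos
    · rw [hv0]; exact hx.1
    · have := hv_lt hkpos hk
      rw [hv0] at this
      linarith [hx.1]
  have hbasis_eval : ∀ k : ℕ, (Lagrange.basis (Finset.range n) v k).eval x
      = ∏ j ∈ (Finset.range n).erase k, ((v k - v j)⁻¹ * (x - v j)) := by
    intro k
    rw [Lagrange.basis, Polynomial.eval_prod]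
    apply Finset.prod_congr rfl
    intro j hj
    rw [Lagrange.basisDivisor]
    simp
  have hsplit : ∀ k < n, (Finset.range n).erase k
      = Finset.range k ∪ Finset.Ioo k n := by
    intro k hk
    ext j
    simp only [Finset.mem_erase, Finset.mem_range, Finset.mem_union, Finset.mem_Ioo]
    omega
  have hdisj : ∀ k : ℕ, Disjoint (Finset.range k) (Finset.Ioo k n) := by
    intro k
    rw [Finset.disjoint_left]
    intro j hj1 hj2
    simp only [Finset.mem_range] at hj1
    simp only [Finset.mem_Ioo] at hj2
    omega
  have hsign : ∀ k : ℕ, k < n →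
      |(Lagrange.basis (Finset.range n) v k).eval x|
        = (-1 : ℝ) ^ k * (Lagrange.basis (Finset.range n) v k).eval x := by
    intro k hk
    rw [hbasis_eval k, hsplit k hk, Finset.prod_union (hdisj k)]
    set L : ℝ := ∏ j ∈ Finset.range k, ((v k - v j)⁻¹ * (x - v j)) with hLdef
    set H : ℝ := ∏ j ∈ Finset.Ioo k n, ((v k - v j)⁻¹ * (x - v j)) with hHdef
    have hHnn : 0 ≤ H := by
      rw [hHdef]
      apply Finset.prod_nonneg
      intro j hj
      simp only [Finset.mem_Ioo] at hj
      have h1 : v j < v k := hv_lt hj.1 hj.2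
      have h2 : v j ≤ x := hxv j hj.2
      have h3 : 0 < (v k - v j) := by linarith
      exact mul_nonneg (inv_nonneg.2 h3.le) (by linarith)
    have hLsign : 0 ≤ (-1 : ℝ) ^ k * L := by
      have := prod_parity (s := Finset.range k)
        (f := fun j => (v k - v j)⁻¹ * (x - v j)) ?_
      · rwa [Finset.card_range] at this
      · intro j hj
        simp only [Finset.mem_range] at hj
        have h1 : v k < v j := hv_lt hj hk
        have h2 : v j ≤ x := hxv j (lt_trans hj hk)
        refine mul_nonpos_iff.2 (Or.inr ⟨?_, by linarith⟩)
        exact inv_nonpos.2 (by linarith)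
    rcases Nat.even_or_odd k with he | ho
    · rw [he.neg_one_pow] at hLsign ⊢
      rw [one_mul] at hLsign ⊢
      exact abs_of_nonneg (mul_nonneg hLsign hHnn)
    · rw [ho.neg_one_pow] at hLsign ⊢
      have hL0 : L ≤ 0 := by linarith
      rw [neg_one_mul]
      exact abs_of_nonpos (mul_nonpos_iff.2 (Or.inr ⟨hL0, hHnn⟩))
  -- main computation
  have hq_eval : q.eval x = ∑ k ∈ Finset.range n,
      q.eval (v k) * (Lagrange.basis (Finset.range n) v k).eval x := by
    conv_lhs => rw [key1]
    rw [Lagrange.interpolate_apply, Polynomial.eval_finset_sum]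
    apply Finset.sum_congr rfl
    intro k hk
    rw [Polynomial.eval_mul, Polynomial.eval_C]
  have hD_eval : D.eval x = ∑ k ∈ Finset.range n,
      D.eval (v k) * (Lagrange.basis (Finset.range n) v k).eval x := by
    conv_lhs => rw [key2]
    rw [Lagrange.interpolate_apply, Polynomial.eval_finset_sum]
    apply Finset.sum_congr rfl
    intro k hk
    rw [Polynomial.eval_mul, Polynomial.eval_C]
  calc |q.eval x| ≤ ∑ k ∈ Finset.range n,
        |q.eval (v k) * (Lagrange.basis (Finset.range n) v k).eval x| := by
        rw [hq_eval]
        exact Finset.abs_sum_le_sum_abs _ _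
    _ ≤ ∑ k ∈ Finset.range n, M * (D.eval (v k) * (Lagrange.basis (Finset.range n) v k).eval x) := by
        apply Finset.sum_le_sum
        intro k hk
        have hk' : k < n := Finset.mem_range.1 hk
        rw [abs_mul, hsign k hk']
        have h1 : |q.eval (v k)| * ((-1 : ℝ) ^ k * (Lagrange.basis (Finset.range n) v k).eval x)
            ≤ ((n : ℝ) * M / Real.sin (ang k)) * ((-1 : ℝ) ^ k * (Lagrange.basis (Finset.range n) v k).eval x) := by
          apply mul_le_mul_of_nonneg_right (hval k hk')
          rw [← hsign k hk']
          exact abs_nonneg _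
        refine h1.trans (le_of_eq ?_)
        rw [hDval k hk']
        have hs := hsin_pos k hk'
        field_simp
    _ = M * D.eval x := by
        rw [← Finset.mul_sum, hD_eval]
    _ ≤ M * (n : ℝ) ^ 2 := by
        apply mul_le_mul_of_nonneg_left ?_ hM0
        exact le_trans (le_abs_self _) (hDbound x ⟨by
          have h1 : 0 ≤ Real.cos (π / (2 * n)) := by
            apply Real.cos_nonneg_of_mem_Icc
            have h1n : (1 : ℝ) ≤ n := by exact_mod_cast hn
            constructor
            · have h2 : (0:ℝ) ≤ π / (2 * n) := by positivity
              linarith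
            · rw [div_le_div_iff₀ (by positivity) (by norm_num)]
              nlinarith
          linarith [hx.1], hx.2⟩)
    _ = (n : ℝ) ^ 2 * M := by ring

lemma markov (n : ℕ) (p : ℝ[X]) (hdeg : p.natDegree ≤ n)
    (M : ℝ) (hM : ∀ x ∈ Set.Icc (-1 : ℝ) 1, |p.eval x| ≤ M) :
    ∀ x ∈ Set.Icc (-1 : ℝ) 1, |(Polynomial.derivative p).eval x| ≤ (n : ℝ) ^ 2 * M := by
  intro x hx
  rcases Nat.eq_zero_or_pos n with hn0 | hn
  · subst hn0
    have h0 : p.natDegree = 0 := le_antisymm hdeg (Nat.zero_le _)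
    obtain ⟨c, rfl⟩ := Polynomial.natDegree_eq_zero.1 h0
    simp
  · have hπ := Real.pi_pos
    have hM0 : 0 ≤ M := le_trans (abs_nonneg _) (hM 0 (by norm_num))
    have hn0' : (0 : ℝ) < n := by exact_mod_cast hn
    have h1n : (1 : ℝ) ≤ n := by exact_mod_cast hn
    rcases le_or_gt (Real.cos (π / (2 * n))) x with hcase | hcase
    · exact endzone n hn p hdeg M hM x ⟨hcase, hx.2⟩
    rcases le_or_gt x (-Real.cos (π / (2 * n))) with hcase2 | hcase2
    · -- reflection
      have hdeg2 : (p.comp (-X)).natDegree ≤ n := by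
        rw [Polynomial.natDegree_comp]
        simp only [Polynomial.natDegree_neg, Polynomial.natDegree_X, mul_one]
        exact hdeg
      have hM2 : ∀ y ∈ Set.Icc (-1 : ℝ) 1, |(p.comp (-X)).eval y| ≤ M := by
        intro y hy
        rw [Polynomial.eval_comp, Polynomial.eval_neg, Polynomial.eval_X]
        exact hM (-y) ⟨by linarith [hy.2], by linarith [hy.1]⟩
      have hres := endzone n hn (p.comp (-X)) hdeg2 M hM2 (-x)
        ⟨by linarith, by linarith [hx.1]⟩
      have hder : (Polynomial.derivative (p.comp (-X))).eval (-x)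
          = -((Polynomial.derivative p).eval x) := by
        rw [Polynomial.derivative_comp]
        simp
      rw [hder, abs_neg] at hres
      exact hres
    · -- interior
      have hxIoo : -1 < x ∧ x < 1 := by
        have hcos1 : Real.cos (π / (2 * n)) ≤ 1 := Real.cos_le_one _
        have hcosnn : 0 ≤ Real.cos (π / (2 * n)) := by
          apply Real.cos_nonneg_of_mem_Icc
          constructor
          · have h2 : (0 : ℝ) ≤ π / (2 * n) := by positivity
            linarith
          · rw [div_le_div_iff₀ (by positivity) (by norm_num)]
            nlinarith
        constructor
        · nlinarith
        · nlinarith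
      have hθ1 : 0 < Real.arccos x := Real.arccos_pos.2 hxIoo.2
      have hθ2 : Real.arccos x < π := arccos_lt_pi' hxIoo.1
      have hcosθ : Real.cos (Real.arccos x) = x := Real.cos_arccos hxIoo.1.le hxIoo.2.le
      have hb := bernsteinPt n hn p hdeg M hM (Real.arccos x) ⟨hθ1, hθ2⟩
      rw [hcosθ] at hb
      have hsinθ : Real.sin (Real.arccos x) = Real.sqrt (1 - x ^ 2) := Real.sin_arccos x
      have hsin_ge : Real.sin (π / (2 * n)) ≤ Real.sin (Real.arccos x) := by
        rw [hsinθ]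
        have hsnn : 0 ≤ Real.sin (π / (2 * n)) := by
          apply Real.sin_nonneg_of_nonneg_of_le_pi
          · positivity
          · rw [div_le_iff₀ (by positivity)]
            nlinarith
        rw [show Real.sin (π / (2 * n)) = Real.sqrt (Real.sin (π / (2 * n)) ^ 2) from
          (Real.sqrt_sq hsnn).symm]
        apply Real.sqrt_le_sqrt
        have hss : Real.sin (π / (2 * n)) ^ 2 = 1 - Real.cos (π / (2 * n)) ^ 2 := by
          rw [Real.sin_sq]
        rw [hss]
        have hxsq : x ^ 2 ≤ Real.cos (π / (2 * n)) ^ 2 :=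
          sq_le_sq' (by linarith) (by linarith)
        linarith
      have hjordan : 1 / (n : ℝ) ≤ Real.sin (π / (2 * n)) := by
        have hle := Real.mul_le_sin (x := π / (2 * n)) (by positivity) (by
          rw [div_le_div_iff₀ (by positivity) (by norm_num)]
          nlinarith)
        have h2 : 2 / π * (π / (2 * n)) = 1 / (n : ℝ) := by
          field_simp
        linarith [h2 ▸ hle]
      have hkey : |(Polynomial.derivative p).eval x| * (1 / (n : ℝ)) ≤ (n : ℝ) * M := by
        calc |(Polynomial.derivative p).eval x| * (1 / (n : ℝ))
            ≤ |(Polynomial.derivative p).eval x| * Real.sin (Real.arccos x) := by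
              apply mul_le_mul_of_nonneg_left (le_trans hjordan hsin_ge) (abs_nonneg _)
          _ ≤ (n : ℝ) * M := hb
      calc |(Polynomial.derivative p).eval x|
          = |(Polynomial.derivative p).eval x| * (1 / (n : ℝ)) * n := by
            field_simp
        _ ≤ (n : ℝ) * M * n := mul_le_mul_of_nonneg_right hkey hn0'.le
        _ = (n : ℝ) ^ 2 * M := by ring

end MarkovAux

/-- The sup norm of `g` over the interval `[-1, 1]`. -/
noncomputable def supNormIcc (g : ℝ → ℝ) : ℝ :=
  sSup ((fun x => |g x|) '' Set.Icc (-1 : ℝ) 1)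

/-- **Approximation error for ε-dense eigenvalues.**
If the reals `λ₁ ≤ ⋯ ≤ λₙ` in `[-1,1]` are `ε`-dense on `[-1,1]` with `d² ε < 1`,
and `‖f‖∞ = 1`, then for any polynomial `p` of degree at most `d`,
`∑ i, |p(λᵢ) − f(λᵢ)| ≥ ‖p‖∞ (1 − d² ε) − 1`. -/
theorem approx_error_eps_dense (n d : ℕ) (ε : ℝ) (hε : 0 < ε)
    (hdε : (d : ℝ) ^ 2 * ε < 1)
    (lam : Fin n → ℝ) (hmono : Monotone lam)
    (hmem : ∀ i, lam i ∈ Set.Icc (-1 : ℝ) 1)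
    (hdense : ∀ x ∈ Set.Icc (-1 : ℝ) 1, ∃ i, |x - lam i| ≤ ε)
    (f : ℝ → ℝ) (hf : supNormIcc f = 1)
    (p : Polynomial ℝ) (hpd : p.natDegree ≤ d) :
    ∑ i, |p.eval (lam i) - f (lam i)| ≥
      supNormIcc (fun x => p.eval x) * (1 - (d : ℝ) ^ 2 * ε) - 1 := by
  classical
  have h01 : (0 : ℝ) ∈ Set.Icc (-1 : ℝ) 1 := by norm_num
  set S : Set ℝ := (fun x => |p.eval x|) '' Set.Icc (-1 : ℝ) 1 with hSdef
  have hScomp : IsCompact S := isCompact_Icc.image ((Polynomial.continuous p).abs)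
  have hSne : S.Nonempty := ⟨_, Set.mem_image_of_mem _ h01⟩
  have hSbdd : BddAbove S := hScomp.bddAbove
  set M : ℝ := supNormIcc (fun x => p.eval x) with hMdef
  have hMS : M = sSup S := rfl
  have hub : ∀ x ∈ Set.Icc (-1 : ℝ) 1, |p.eval x| ≤ M := by
    intro x hx
    rw [hMS]
    exact le_csSup hSbdd (Set.mem_image_of_mem _ hx)
  have hM0 : 0 ≤ M := le_trans (abs_nonneg _) (hub 0 h01)
  obtain ⟨x₀, hx₀, hx₀max⟩ : ∃ x₀ ∈ Set.Icc (-1 : ℝ) 1, |p.eval x₀| = M := by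
    have hmem' := hScomp.sSup_mem hSne
    rw [← hMS] at hmem'
    obtain ⟨x₀, hmemx, heq⟩ := hmem'
    exact ⟨x₀, hmemx, heq⟩
  obtain ⟨i, hi⟩ := hdense x₀ hx₀
  -- bound on f
  have hfb : |f (lam i)| ≤ 1 := by
    have hbddf : BddAbove ((fun x => |f x|) '' Set.Icc (-1 : ℝ) 1) := by
      by_contra hcon
      have h0 := Real.sSup_of_not_bddAbove hcon
      rw [supNormIcc] at hf
      rw [h0] at hf
      norm_num at hf
    have hle := le_csSup hbddf (Set.mem_image_of_mem (fun x => |f x|) (hmem i))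
    rw [show sSup ((fun x => |f x|) '' Set.Icc (-1 : ℝ) 1) = 1 from hf] at hle
    exact hle
  -- mean value estimate using Markov's inequality
  have hmvt : |p.eval x₀ - p.eval (lam i)| ≤ ((d : ℝ) ^ 2 * M) * |x₀ - lam i| := by
    have hconv := (convex_Icc (-1 : ℝ) 1).norm_image_sub_le_of_norm_hasDerivWithin_le
      (f := fun x => p.eval x) (f' := fun x => (Polynomial.derivative p).eval x)
      (fun x hx => (Polynomial.hasDerivAt p x).hasDerivWithinAt)
      (fun x hx => by
        rw [Real.norm_eq_abs]
        exact MarkovAux.markov d p hpd M hub x hx)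
      (hmem i) hx₀
    simpa [Real.norm_eq_abs] using hconv
  have hd2 : ((d : ℝ) ^ 2 * M) * |x₀ - lam i| ≤ (d : ℝ) ^ 2 * M * ε :=
    mul_le_mul_of_nonneg_left hi (by positivity)
  have hplam : M - (d : ℝ) ^ 2 * M * ε ≤ |p.eval (lam i)| := by
    have h1 : |p.eval x₀| - |p.eval (lam i)| ≤ |p.eval x₀ - p.eval (lam i)| :=
      abs_sub_abs_le_abs_sub _ _
    rw [hx₀max] at h1
    linarith
  have hterm : M - (d : ℝ) ^ 2 * M * ε - 1 ≤ |p.eval (lam i) - f (lam i)| := by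
    have h2 := abs_sub_abs_le_abs_sub (p.eval (lam i)) (f (lam i))
    linarith
  have hsum : |p.eval (lam i) - f (lam i)| ≤ ∑ j, |p.eval (lam j) - f (lam j)| :=
    Finset.single_le_sum (f := fun j => |p.eval (lam j) - f (lam j)|)
      (fun j _ => abs_nonneg _) (Finset.mem_univ i)
  have hfinal : M * (1 - (d : ℝ) ^ 2 * ε) - 1 = M - (d : ℝ) ^ 2 * M * ε - 1 := by ring
  rw [ge_iff_le, hfinal]
  linarith
end

section
/- Let Â be a real symmetric n × n matrix, and let U and V be orthogonal n × n matrices with Â U = U diag(λ₁, …, λₙ) and Â V = V diag(λ₁, …, λₙ), where λ₁ ≤ λ₂ ≤ ⋯ ≤ λₙ is the same nondecreasing eigenvalue sequence. Let a < b be indices in {1, …, n+1} such that the interval does not split blocks of equal eigenvalues: (a = 1 or λ_{a−1} < λ_a) and (b = n+1 or λ_{b−1} < λ_b). Then U_{[:, a:b)} U_{[:, a:b)}ᵀ = V_{[:, a:b)} V_{[:, a:b)}ᵀ; i.e., the constant spectral filter built from columns a through b−1 of the eigenvector matrix is invariant to sign changes of eigenvectors and to the choice of orthonormal basis within each eigenspace.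 -/
open Matrix

/-- The constant spectral filter `U_{[:, a:b)} U_{[:, a:b)}ᵀ` built from columns
`a, …, b−1` (0-indexed) of `U`, written entrywise as a sum of outer products of the
selected columns. -/
noncomputable def constFilter (n : ℕ) (U : Matrix (Fin n) (Fin n) ℝ) (a b : ℕ) :
    Matrix (Fin n) (Fin n) ℝ :=
  Matrix.of fun i i' =>
    ∑ j ∈ Finset.univ.filter (fun j : Fin n => a ≤ (j : ℕ) ∧ (j : ℕ) < b),
      U i j * U i' j

/-- `constFilter` as a matrix product with an indicator diagonal matrix. -/
lemma constFilter_eq_mul (n : ℕ) (M : Matrix (Fin n) (Fin n) ℝ) (a b : ℕ) :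
    constFilter n M a b =
      M * Matrix.diagonal (fun i : Fin n => if a ≤ (i : ℕ) ∧ (i : ℕ) < b then (1:ℝ) else 0)
        * Mᵀ := by
  ext i i'
  rw [Matrix.mul_apply]
  simp only [constFilter, Matrix.of_apply, Matrix.mul_diagonal, Matrix.transpose_apply]
  rw [Finset.sum_filter]
  refine Finset.sum_congr rfl fun j _ => ?_
  by_cases h : a ≤ (j : ℕ) ∧ (j : ℕ) < b <;> simp [h]

/-- **Sign and basis invariance of constant filters.** If `U` and `V` are orthogonal
matrices diagonalizing the symmetric matrix `Â` with the same nondecreasing eigenvalue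
sequence `λ`, and the column interval `[a, b)` does not split blocks of equal
eigenvalues, then `U_{[:, a:b)} U_{[:, a:b)}ᵀ = V_{[:, a:b)} V_{[:, a:b)}ᵀ`. -/
theorem const_filter_invariant (n : ℕ) (A U V : Matrix (Fin n) (Fin n) ℝ)
    (lam : Fin n → ℝ) (hA : A.IsSymm) (hmono : Monotone lam)
    (hU : U * Uᵀ = 1) (hU' : Uᵀ * U = 1)
    (hV : V * Vᵀ = 1) (hV' : Vᵀ * V = 1)
    (hAU : A * U = U * Matrix.diagonal lam)
    (hAV : A * V = V * Matrix.diagonal lam)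
    (a b : ℕ) (hab : a < b) (hb : b ≤ n)
    (ha0 : a = 0 ∨
      lam ⟨a - 1, Nat.lt_of_le_of_lt (Nat.sub_le a 1) (lt_of_lt_of_le hab hb)⟩ <
        lam ⟨a, lt_of_lt_of_le hab hb⟩)
    (hbn : b = n ∨ ∃ hlt : b < n,
      lam ⟨b - 1, Nat.lt_of_le_of_lt (Nat.sub_le b 1) hlt⟩ < lam ⟨b, hlt⟩) :
    constFilter n U a b = constFilter n V a b := by
  set d : Fin n → ℝ := fun i => if a ≤ (i : ℕ) ∧ (i : ℕ) < b then (1:ℝ) else 0 with hd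
  -- the interval [a, b) does not split blocks of equal eigenvalues
  have key : ∀ i j : Fin n, lam i = lam j →
      (a ≤ (i : ℕ) ∧ (i : ℕ) < b) → (a ≤ (j : ℕ) ∧ (j : ℕ) < b) := by
    intro i j hij ⟨hai, hib⟩
    constructor
    · by_contra h
      push_neg at h
      rcases ha0 with h0 | hlt
      · omega
      · have h1 : lam j ≤ lam ⟨a - 1, Nat.lt_of_le_of_lt (Nat.sub_le a 1)
            (lt_of_lt_of_le hab hb)⟩ := hmono (by simp [Fin.le_def]; omega)
        have h2 : lam ⟨a, lt_of_lt_of_le hab hb⟩ ≤ lam i :=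
          hmono (by simp [Fin.le_def]; omega)
        linarith
    · by_contra h
      push_neg at h
      rcases hbn with h0 | ⟨hlt, hblt⟩
      · omega
      · have h1 : lam i ≤ lam ⟨b - 1, Nat.lt_of_le_of_lt (Nat.sub_le b 1) hlt⟩ :=
          hmono (by simp [Fin.le_def]; omega)
        have h2 : lam ⟨b, hlt⟩ ≤ lam j := hmono (by simp [Fin.le_def]; omega)
        linarith
  have hdkey : ∀ i j : Fin n, lam i = lam j → d i = d j := by
    intro i j hij
    by_cases hi : a ≤ (i : ℕ) ∧ (i : ℕ) < b
    · have hj := key i j hij hi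
      simp [hd, hi, hj]
    · have hj : ¬(a ≤ (j : ℕ) ∧ (j : ℕ) < b) := fun hj => hi (key j i hij.symm hj)
      simp [hd, hi, hj]
  set W : Matrix (Fin n) (Fin n) ℝ := Uᵀ * V with hW
  -- Uᵀ A = diag(lam) Uᵀ
  have hUAt : Uᵀ * A = Matrix.diagonal lam * Uᵀ := by
    have := congrArg Matrix.transpose hAU
    rw [Matrix.transpose_mul, Matrix.transpose_mul, Matrix.diagonal_transpose, hA.eq] at this
    exact this
  -- W commutes with diag(lam)
  have hWD : W * Matrix.diagonal lam = Matrix.diagonal lam * W := by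
    calc W * Matrix.diagonal lam = Uᵀ * (V * Matrix.diagonal lam) := by
          rw [hW, Matrix.mul_assoc]
      _ = Uᵀ * (A * V) := by rw [hAV]
      _ = (Uᵀ * A) * V := by rw [Matrix.mul_assoc]
      _ = Matrix.diagonal lam * W := by rw [hUAt, hW, Matrix.mul_assoc]
  have hzero : ∀ i j : Fin n, lam i ≠ lam j → W i j = 0 := by
    intro i j hne
    have h : (W * Matrix.diagonal lam) i j = (Matrix.diagonal lam * W) i j := by rw [hWD]
    rw [Matrix.mul_diagonal, Matrix.diagonal_mul] at h
    have h2 : W i j * (lam j - lam i) = 0 := by ring_nf; linarith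
    rcases mul_eq_zero.mp h2 with h3 | h3
    · exact h3
    · exact absurd (by linarith : lam i = lam j) hne
  -- W commutes with diag(d)
  have hWd : W * Matrix.diagonal d = Matrix.diagonal d * W := by
    ext i j
    rw [Matrix.mul_diagonal, Matrix.diagonal_mul]
    by_cases h : lam i = lam j
    · rw [hdkey i j h]; ring
    · rw [hzero i j h]; ring
  -- W is orthogonal
  have hWWt : W * Wᵀ = 1 := by
    rw [hW, Matrix.transpose_mul, Matrix.transpose_transpose]
    calc Uᵀ * V * (Vᵀ * U) = Uᵀ * (V * Vᵀ) * U := by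
          rw [Matrix.mul_assoc, Matrix.mul_assoc, Matrix.mul_assoc]
      _ = Uᵀ * U := by rw [hV, Matrix.mul_one]
      _ = 1 := hU'
  have hVW : V = U * W := by
    rw [hW, ← Matrix.mul_assoc, hU, Matrix.one_mul]
  have hconj : W * Matrix.diagonal d * Wᵀ = Matrix.diagonal d := by
    rw [hWd, Matrix.mul_assoc, hWWt, Matrix.mul_one]
  rw [constFilter_eq_mul, constFilter_eq_mul, hVW, Matrix.transpose_mul]
  calc U * Matrix.diagonal d * Uᵀ
      = U * (W * Matrix.diagonal d * Wᵀ) * Uᵀ := by rw [hconj]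
    _ = U * W * Matrix.diagonal d * (Wᵀ * Uᵀ) := by simp only [Matrix.mul_assoc]
end
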